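/- Let Ω ⊆ M be a domain (connected open set in a hypercomplex subspace M ≅ ℝ^{m+1} of a real alternative *-algebra A), and let f : Ω → A be C² and left monogenic (∂̄_B f = 0). Then f is harmonic: Δ_B f := ∑_{s=0}^m ∂ₛ²f = 0 on Ω. -/

import Mathlib

/-- Let `Ω` be a domain (connected open set) in the hypercomplex subspace `M ≅ ℝ^{m+1}` of
a real alternative `∗`-algebra `A` (multiplication `μ`, unity `e`, hypercomplex basis
`v 0 = e, v 1, …, v m`), and `f : Ω → A` a `C²` left monogenic function.  Then `f` is
harmonic on `Ω`: `Δ_B f = ∑ₛ ∂ₛ² f = 0`. -/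
theorem monogenic_is_harmonic {A : Type*} [NormedAddCommGroup A] [NormedSpace ℝ A]
    [FiniteDimensional ℝ A]
    (μ : A →L[ℝ] A →L[ℝ] A) (e : A)
    (he : ∀ a : A, μ e a = a ∧ μ a e = a)
    (hLA : ∀ a b : A, μ (μ a a) b = μ a (μ a b))
    (hRA : ∀ a b : A, μ (μ a b) b = μ a (μ b b))
    (m : ℕ) (hm : 1 ≤ m) (v : Fin (m + 1) → A)
    (hv0 : v 0 = e)
    (hvsq : ∀ s, s ≠ 0 → μ (v s) (v s) = -e)
    (hvanti : ∀ s t, s ≠ 0 → t ≠ 0 → s ≠ t → μ (v s) (v t) = -μ (v t) (v s))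
    (Ω : Set ((Fin (m + 1)) → ℝ)) (hΩopen : IsOpen Ω) (hΩconn : IsConnected Ω)
    (f : ((Fin (m + 1)) → ℝ) → A)
    (hC2 : ContDiffOn ℝ 2 f Ω)
    (hmono : ∀ x ∈ Ω, ∑ s, μ (v s) (fderiv ℝ f x (Pi.single s 1)) = 0) :
    ∀ x ∈ Ω, ∑ s, fderiv ℝ (fun p => fderiv ℝ f p (Pi.single s 1)) x (Pi.single s 1) = 0 := by
  intro x hx
  have hxn : Ω ∈ nhds x := hΩopen.mem_nhds hx
  have hf2 : ContDiffAt ℝ 2 f x := hC2.contDiffAt hxn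
  have hder1 : ContDiffAt ℝ 1 (fderiv ℝ f) x := hf2.fderiv_right (by norm_num)
  have hdiff : DifferentiableAt ℝ (fderiv ℝ f) x := hder1.differentiableAt one_ne_zero
  set D := fderiv ℝ (fderiv ℝ f) x with hD
  have hsymmD : ∀ u w, D u w = D w u := fun u w => hf2.isSymmSndFDerivAt (by norm_num) u w
  have key : ∀ s : Fin (m+1), HasFDerivAt (fun p => fderiv ℝ f p (Pi.single s 1))
      ((ContinuousLinearMap.apply ℝ A (Pi.single s (1:ℝ))).comp D) x := by
    intro s
    exact (ContinuousLinearMap.apply ℝ A (Pi.single s 1)).hasFDerivAt.comp x hdiff.hasFDerivAt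
  have hfd : ∀ s : Fin (m+1), fderiv ℝ (fun p => fderiv ℝ f p (Pi.single s 1)) x
      = (ContinuousLinearMap.apply ℝ A (Pi.single s (1:ℝ))).comp D := fun s => (key s).fderiv
  have hmono' : ∀ w, ∑ s, μ (v s) (D w (Pi.single s 1)) = 0 := by
    have hH : HasFDerivAt (fun p => ∑ s, μ (v s) (fderiv ℝ f p (Pi.single s 1)))
        (∑ s, (μ (v s)).comp ((ContinuousLinearMap.apply ℝ A (Pi.single s (1:ℝ))).comp D)) x := by
      apply HasFDerivAt.fun_sum
      intro s _
      exact (μ (v s)).hasFDerivAt.comp x (key s)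
    have hzero : (fun p => ∑ s, μ (v s) (fderiv ℝ f p (Pi.single s 1))) =ᶠ[nhds x]
        fun _ => (0:A) := Filter.eventuallyEq_of_mem hxn hmono
    have h0 : (∑ s, (μ (v s)).comp
        ((ContinuousLinearMap.apply ℝ A (Pi.single s (1:ℝ))).comp D)) = 0 := by
      have h1 := hH.fderiv
      rw [hzero.fderiv_eq] at h1
      simpa using h1.symm
    intro w
    have h2 := congrArg (fun L : ((Fin (m+1)) → ℝ) →L[ℝ] A => L w) h0
    simpa using h2
  set d : Fin (m+1) → Fin (m+1) → A := fun s t => D (Pi.single t 1) (Pi.single s 1) with hd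
  have hdsymm : ∀ s t, d s t = d t s := fun s t => hsymmD _ _
  have hE : ∀ t, ∑ s, μ (v s) (d s t) = 0 := fun t => hmono' _
  have hgoal : ∀ s : Fin (m+1),
      fderiv ℝ (fun p => fderiv ℝ f p (Pi.single s 1)) x (Pi.single s 1) = d s s := by
    intro s; rw [hfd s]; rfl
  rw [Finset.sum_congr rfl fun s _ => hgoal s]
  -- now pure algebra: goal ∑ s, d s s = 0
  have he1 : ∀ y : A, μ (v 0) y = y := fun y => by rw [hv0]; exact (he y).1
  have hsq : ∀ t (y : A), t ≠ 0 → μ (v t) (μ (v t) y) = -y := by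
    intro t y ht
    rw [← hLA, hvsq t ht, map_neg, ContinuousLinearMap.neg_apply, (he y).1]
  have pol : ∀ a b y : A, μ (μ a b) y + μ (μ b a) y = μ a (μ b y) + μ b (μ a y) := by
    intro a b y
    have h0 := hLA (a + b) y
    have lhs : μ (μ (a+b) (a+b)) y
        = μ (μ a a) y + (μ (μ a b) y + (μ (μ b a) y + μ (μ b b) y)) := by
      simp only [map_add, ContinuousLinearMap.add_apply]
      abel
    have rhs : μ (a+b) (μ (a+b) y)
        = μ a (μ a y) + (μ a (μ b y) + (μ b (μ a y) + μ b (μ b y))) := by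
      simp only [map_add, ContinuousLinearMap.add_apply]
      abel
    rw [lhs, rhs, hLA a y, hLA b y] at h0
    have h2 := add_left_cancel h0
    have h3 : (μ (μ a b) y + μ (μ b a) y) + μ b (μ b y)
        = (μ a (μ b y) + μ b (μ a y)) + μ b (μ b y) := by
      rw [add_assoc, add_assoc]; exact h2
    exact add_right_cancel h3
  have hlin : ∀ s t, s ≠ 0 → t ≠ 0 → s ≠ t → ∀ y : A,
      μ (v s) (μ (v t) y) + μ (v t) (μ (v s) y) = 0 := by
    intro s t hs ht hst y
    rw [← pol (v s) (v t) y, hvanti s t hs ht hst, map_neg, ContinuousLinearMap.neg_apply]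
    exact neg_add_cancel _
  set F : Fin (m+1) → Fin (m+1) → A :=
    fun t s => (if t = 0 then (1:ℝ) else -1) • μ (v t) (μ (v s) (d s t)) with hF
  have hrow : ∀ t, ∑ s, F t s = 0 := by
    intro t
    have hmap : ∑ s, μ (v t) (μ (v s) (d s t)) = μ (v t) (∑ s, μ (v s) (d s t)) :=
      (map_sum (μ (v t)) _ _).symm
    calc ∑ s, F t s = (if t = 0 then (1:ℝ) else -1) • ∑ s, μ (v t) (μ (v s) (d s t)) :=
          (Finset.smul_sum).symm
      _ = 0 := by rw [hmap, hE t, map_zero, smul_zero]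
  have hpair : ∀ t s, F t s + F s t = (if s = t then ((2:ℝ) • d t t) else 0) := by
    intro t s
    by_cases hst : s = t
    · subst hst
      rw [if_pos rfl, two_smul]
      by_cases hs0 : s = 0
      · subst hs0
        simp only [hF, if_pos rfl, if_true, one_smul, he1]
      · simp only [hF, if_neg hs0, hsq s _ hs0, neg_smul, one_smul, neg_neg]
    · rw [if_neg hst]
      by_cases ht0 : t = 0
      · subst ht0
        have hs0 : s ≠ 0 := hst
        simp only [hF, if_pos rfl, if_true, if_neg hs0, one_smul, neg_smul, he1, hdsymm s 0]
        exact add_neg_cancel _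
      · by_cases hs0 : s = 0
        · subst hs0
          simp only [hF, if_pos rfl, if_true, if_neg ht0, one_smul, neg_smul, he1, hdsymm t 0]
          exact neg_add_cancel _
        · have hts : t ≠ s := fun h => hst h.symm
          simp only [hF, if_neg ht0, if_neg hs0, neg_smul, one_smul, hdsymm t s]
          rw [← neg_add]
          rw [hlin t s ht0 hs0 hts (d s t)]
          exact neg_zero
  have hS : (∑ t, ∑ s, F t s) = 0 := by
    simp only [hrow, Finset.sum_const_zero]
  have hdouble : (2:ℝ) • (∑ t : Fin (m+1), ∑ s : Fin (m+1), F t s)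
      = (2:ℝ) • ∑ t, d t t := by
    have swap : (∑ t : Fin (m+1), ∑ s : Fin (m+1), F t s) = ∑ t, ∑ s, F s t :=
      Finset.sum_comm
    calc (2:ℝ) • (∑ t : Fin (m+1), ∑ s : Fin (m+1), F t s)
        = (∑ t : Fin (m+1), ∑ s : Fin (m+1), F t s) + ∑ t, ∑ s, F s t := by
          rw [two_smul]; rw [swap]
      _ = ∑ t : Fin (m+1), ((∑ s, F t s) + ∑ s, F s t) := by
          rw [← Finset.sum_add_distrib]
      _ = ∑ t : Fin (m+1), ∑ s, (F t s + F s t) := by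
          refine Finset.sum_congr rfl fun t _ => ?_
          rw [← Finset.sum_add_distrib]
      _ = ∑ t : Fin (m+1), ∑ s, (if s = t then ((2:ℝ) • d t t) else 0) := by
          refine Finset.sum_congr rfl fun t _ => Finset.sum_congr rfl fun s _ => hpair t s
      _ = ∑ t : Fin (m+1), (2:ℝ) • d t t := by
          refine Finset.sum_congr rfl fun t _ => ?_
          simp
      _ = (2:ℝ) • ∑ t, d t t := (Finset.smul_sum).symm
  have hfin : (2:ℝ) • (∑ t : Fin (m+1), d t t) = 0 := by
    rw [← hdouble, hS, smul_zero]
  have := (smul_eq_zero.mp hfin).resolve_left (by norm_num)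
  exact this
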